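/- An endomorphism M of V satisfies Φ₀(Mx, y, z) + Φ₀(x, My, z) + Φ₀(x, y, Mz) = 0 for all x, y, z ∈ V if and only if its matrix in the basis (E₁,…,E₇), written in block form with block row/column sizes (1, 2, 1, 2, 1), equals [ tr A , Z , s , Wᵀ , 0 ; X , A , √2·J·Zᵀ , (s/√2)·J , −W ; r , −√2·Xᵀ·J , 0 , −√2·Z·J , s ; Yᵀ , −(r/√2)·J , √2·J·X , −Aᵀ , −Zᵀ ; 0 , −Y , r , −Xᵀ , −tr A ] for some 2×2 real matrix A, column vectors X, W ∈ ℝ², row vectors Y, Z ∈ M₁ₓ₂(ℝ), and scalars r, s ∈ ℝ, where J := [[0,−1],[1,0]]. In particular, the Lie algebra 𝔤₂ of all such M is 14-dimensional. -/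

import Mathlib

noncomputable section

noncomputable section

/-- `V = ℝ⁷` with its standard basis. -/
abbrev V7 : Type := Fin 7 → ℝ

/-- Evaluation of the basis 3-form `eⁱ ∧ eʲ ∧ eᵏ` on `(x, y, z)`: the determinant of the
3×3 matrix of the corresponding coordinates. -/
def tripleDet (i j k : Fin 7) (x y z : V7) : ℝ :=
  x i * (y j * z k - y k * z j) - x j * (y i * z k - y k * z i) + x k * (y i * z j - y j * z i)

/-- The split-generic 3-form `Φ₀ = −e¹∧e⁴∧e⁷ + √2·e¹∧e⁵∧e⁶ + √2·e²∧e³∧e⁷ + e²∧e⁴∧e⁵ + e³∧e⁴∧e⁶`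
(indices here are 0-indexed). -/
def Phi0 (x y z : V7) : ℝ :=
  -(tripleDet 0 3 6 x y z) + Real.sqrt 2 * tripleDet 0 4 5 x y z
    + Real.sqrt 2 * tripleDet 1 2 6 x y z + tripleDet 1 3 4 x y z + tripleDet 2 3 5 x y z

/-- The symmetric bilinear form `H₀` of signature (3,4):
`H₀(E₁,E₇) = H₀(E₂,E₅) = H₀(E₃,E₆) = 1`, `H₀(E₄,E₄) = −1` (1-indexed). -/
def H0 (x y : V7) : ℝ :=
  x 0 * y 6 + x 6 * y 0 + x 1 * y 4 + x 4 * y 1 + x 2 * y 5 + x 5 * y 2 - x 3 * y 3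

lemma Phi0_add_left (a b y z : V7) : Phi0 (a + b) y z = Phi0 a y z + Phi0 b y z := by
  simp only [Phi0, tripleDet, Pi.add_apply]; ring

lemma Phi0_add_middle (x a b z : V7) : Phi0 x (a + b) z = Phi0 x a z + Phi0 x b z := by
  simp only [Phi0, tripleDet, Pi.add_apply]; ring

lemma Phi0_add_right (x y a b : V7) : Phi0 x y (a + b) = Phi0 x y a + Phi0 x y b := by
  simp only [Phi0, tripleDet, Pi.add_apply]; ring

lemma Phi0_smul_left (c : ℝ) (a y z : V7) : Phi0 (c • a) y z = c * Phi0 a y z := by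
  simp only [Phi0, tripleDet, Pi.smul_apply, smul_eq_mul]; ring

lemma Phi0_smul_middle (c : ℝ) (x a z : V7) : Phi0 x (c • a) z = c * Phi0 x a z := by
  simp only [Phi0, tripleDet, Pi.smul_apply, smul_eq_mul]; ring

lemma Phi0_smul_right (c : ℝ) (x y a : V7) : Phi0 x y (c • a) = c * Phi0 x y a := by
  simp only [Phi0, tripleDet, Pi.smul_apply, smul_eq_mul]; ring

/-- The Lie algebra `𝔤₂` of the stabilizer of `Φ₀`: all endomorphisms `M` of `V` with
`Φ₀(Mx,y,z) + Φ₀(x,My,z) + Φ₀(x,y,Mz) = 0`. -/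
def g2 : Submodule ℝ (V7 →ₗ[ℝ] V7) where
  carrier := {M | ∀ x y z : V7, Phi0 (M x) y z + Phi0 x (M y) z + Phi0 x y (M z) = 0}
  add_mem' := by
    intro M N hM hN x y z
    simp only [LinearMap.add_apply, Phi0_add_left, Phi0_add_middle, Phi0_add_right]
    linarith [hM x y z, hN x y z]
  zero_mem' := by
    intro x y z
    simp [Phi0, tripleDet]
  smul_mem' := by
    intro c M hM x y z
    simp only [LinearMap.smul_apply, Phi0_smul_left, Phi0_smul_middle, Phi0_smul_right]
    linear_combination c * hM x y z

/-- The 7×7 matrix in block form with block sizes (1,2,1,2,1), where `J = [[0,−1],[1,0]]`. -/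
def g2Matrix (A : Matrix (Fin 2) (Fin 2) ℝ) (X W Y Z : Fin 2 → ℝ) (r s : ℝ) :
    Matrix (Fin 7) (Fin 7) ℝ :=
  !![A.trace, Z 0, Z 1, s, W 0, W 1, 0;
     X 0, A 0 0, A 0 1, -(Real.sqrt 2 * Z 1), 0, -(s / Real.sqrt 2), -W 0;
     X 1, A 1 0, A 1 1, Real.sqrt 2 * Z 0, s / Real.sqrt 2, 0, -W 1;
     r, -(Real.sqrt 2 * X 1), Real.sqrt 2 * X 0, 0, -(Real.sqrt 2 * Z 1), Real.sqrt 2 * Z 0, s;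
     Y 0, 0, r / Real.sqrt 2, -(Real.sqrt 2 * X 1), -A 0 0, -A 1 0, -Z 0;
     Y 1, -(r / Real.sqrt 2), 0, Real.sqrt 2 * X 0, -A 0 1, -A 1 1, -Z 1;
     0, -Y 0, -Y 1, r, -X 0, -X 1, -A.trace]


-- ===== auxiliary material =====

@[simp] lemma cons_val_five' {α : Type*} (a b c d e f g : α) : ![a,b,c,d,e,f,g] 5 = f := rfl
@[simp] lemma cons_val_six' {α : Type*} (a b c d e f g : α) : ![a,b,c,d,e,f,g] 6 = g := rfl

lemma fm0 : (⟨0, by omega⟩ : Fin 7) = 0 := rfl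
lemma fm1 : (⟨1, by omega⟩ : Fin 7) = 1 := rfl
lemma fm2 : (⟨2, by omega⟩ : Fin 7) = 2 := rfl
lemma fm3 : (⟨3, by omega⟩ : Fin 7) = 3 := rfl
lemma fm4 : (⟨4, by omega⟩ : Fin 7) = 4 := rfl
lemma fm5 : (⟨5, by omega⟩ : Fin 7) = 5 := rfl
lemma fm6 : (⟨6, by omega⟩ : Fin 7) = 6 := rfl

/-- standard basis vectors in the `toMatrix'` normal form -/
def ee (j : Fin 7) : V7 := fun i => if i = j then 1 else 0

lemma hsq : Real.sqrt 2 * Real.sqrt 2 = 2 := Real.mul_self_sqrt (by norm_num)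

lemma hdiv (t : ℝ) : t / Real.sqrt 2 = t * Real.sqrt 2 / 2 := by
  rw [div_eq_iff (by positivity : Real.sqrt 2 ≠ 0)]
  linear_combination (-(t/2)) * hsq

lemma g2e_0_0 (A : Matrix (Fin 2) (Fin 2) ℝ) (X W Y Z : Fin 2 → ℝ) (r s : ℝ) :
    g2Matrix A X W Y Z r s 0 0 = A.trace := rfl
lemma g2e_0_1 (A : Matrix (Fin 2) (Fin 2) ℝ) (X W Y Z : Fin 2 → ℝ) (r s : ℝ) :
    g2Matrix A X W Y Z r s 0 1 = Z 0 := rfl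
lemma g2e_0_2 (A : Matrix (Fin 2) (Fin 2) ℝ) (X W Y Z : Fin 2 → ℝ) (r s : ℝ) :
    g2Matrix A X W Y Z r s 0 2 = Z 1 := rfl
lemma g2e_0_3 (A : Matrix (Fin 2) (Fin 2) ℝ) (X W Y Z : Fin 2 → ℝ) (r s : ℝ) :
    g2Matrix A X W Y Z r s 0 3 = s := rfl
lemma g2e_0_4 (A : Matrix (Fin 2) (Fin 2) ℝ) (X W Y Z : Fin 2 → ℝ) (r s : ℝ) :
    g2Matrix A X W Y Z r s 0 4 = W 0 := rfl
lemma g2e_0_5 (A : Matrix (Fin 2) (Fin 2) ℝ) (X W Y Z : Fin 2 → ℝ) (r s : ℝ) :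
    g2Matrix A X W Y Z r s 0 5 = W 1 := rfl
lemma g2e_0_6 (A : Matrix (Fin 2) (Fin 2) ℝ) (X W Y Z : Fin 2 → ℝ) (r s : ℝ) :
    g2Matrix A X W Y Z r s 0 6 = 0 := rfl
lemma g2e_1_0 (A : Matrix (Fin 2) (Fin 2) ℝ) (X W Y Z : Fin 2 → ℝ) (r s : ℝ) :
    g2Matrix A X W Y Z r s 1 0 = X 0 := rfl
lemma g2e_1_1 (A : Matrix (Fin 2) (Fin 2) ℝ) (X W Y Z : Fin 2 → ℝ) (r s : ℝ) :
    g2Matrix A X W Y Z r s 1 1 = A 0 0 := rfl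
lemma g2e_1_2 (A : Matrix (Fin 2) (Fin 2) ℝ) (X W Y Z : Fin 2 → ℝ) (r s : ℝ) :
    g2Matrix A X W Y Z r s 1 2 = A 0 1 := rfl
lemma g2e_1_3 (A : Matrix (Fin 2) (Fin 2) ℝ) (X W Y Z : Fin 2 → ℝ) (r s : ℝ) :
    g2Matrix A X W Y Z r s 1 3 = -(Real.sqrt 2 * Z 1) := rfl
lemma g2e_1_4 (A : Matrix (Fin 2) (Fin 2) ℝ) (X W Y Z : Fin 2 → ℝ) (r s : ℝ) :
    g2Matrix A X W Y Z r s 1 4 = 0 := rfl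
lemma g2e_1_5 (A : Matrix (Fin 2) (Fin 2) ℝ) (X W Y Z : Fin 2 → ℝ) (r s : ℝ) :
    g2Matrix A X W Y Z r s 1 5 = -(s / Real.sqrt 2) := rfl
lemma g2e_1_6 (A : Matrix (Fin 2) (Fin 2) ℝ) (X W Y Z : Fin 2 → ℝ) (r s : ℝ) :
    g2Matrix A X W Y Z r s 1 6 = -W 0 := rfl
lemma g2e_2_0 (A : Matrix (Fin 2) (Fin 2) ℝ) (X W Y Z : Fin 2 → ℝ) (r s : ℝ) :
    g2Matrix A X W Y Z r s 2 0 = X 1 := rfl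
lemma g2e_2_1 (A : Matrix (Fin 2) (Fin 2) ℝ) (X W Y Z : Fin 2 → ℝ) (r s : ℝ) :
    g2Matrix A X W Y Z r s 2 1 = A 1 0 := rfl
lemma g2e_2_2 (A : Matrix (Fin 2) (Fin 2) ℝ) (X W Y Z : Fin 2 → ℝ) (r s : ℝ) :
    g2Matrix A X W Y Z r s 2 2 = A 1 1 := rfl
lemma g2e_2_3 (A : Matrix (Fin 2) (Fin 2) ℝ) (X W Y Z : Fin 2 → ℝ) (r s : ℝ) :
    g2Matrix A X W Y Z r s 2 3 = Real.sqrt 2 * Z 0 := rfl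
lemma g2e_2_4 (A : Matrix (Fin 2) (Fin 2) ℝ) (X W Y Z : Fin 2 → ℝ) (r s : ℝ) :
    g2Matrix A X W Y Z r s 2 4 = s / Real.sqrt 2 := rfl
lemma g2e_2_5 (A : Matrix (Fin 2) (Fin 2) ℝ) (X W Y Z : Fin 2 → ℝ) (r s : ℝ) :
    g2Matrix A X W Y Z r s 2 5 = 0 := rfl
lemma g2e_2_6 (A : Matrix (Fin 2) (Fin 2) ℝ) (X W Y Z : Fin 2 → ℝ) (r s : ℝ) :
    g2Matrix A X W Y Z r s 2 6 = -W 1 := rfl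
lemma g2e_3_0 (A : Matrix (Fin 2) (Fin 2) ℝ) (X W Y Z : Fin 2 → ℝ) (r s : ℝ) :
    g2Matrix A X W Y Z r s 3 0 = r := rfl
lemma g2e_3_1 (A : Matrix (Fin 2) (Fin 2) ℝ) (X W Y Z : Fin 2 → ℝ) (r s : ℝ) :
    g2Matrix A X W Y Z r s 3 1 = -(Real.sqrt 2 * X 1) := rfl
lemma g2e_3_2 (A : Matrix (Fin 2) (Fin 2) ℝ) (X W Y Z : Fin 2 → ℝ) (r s : ℝ) :
    g2Matrix A X W Y Z r s 3 2 = Real.sqrt 2 * X 0 := rfl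
lemma g2e_3_3 (A : Matrix (Fin 2) (Fin 2) ℝ) (X W Y Z : Fin 2 → ℝ) (r s : ℝ) :
    g2Matrix A X W Y Z r s 3 3 = 0 := rfl
lemma g2e_3_4 (A : Matrix (Fin 2) (Fin 2) ℝ) (X W Y Z : Fin 2 → ℝ) (r s : ℝ) :
    g2Matrix A X W Y Z r s 3 4 = -(Real.sqrt 2 * Z 1) := rfl
lemma g2e_3_5 (A : Matrix (Fin 2) (Fin 2) ℝ) (X W Y Z : Fin 2 → ℝ) (r s : ℝ) :
    g2Matrix A X W Y Z r s 3 5 = Real.sqrt 2 * Z 0 := rfl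
lemma g2e_3_6 (A : Matrix (Fin 2) (Fin 2) ℝ) (X W Y Z : Fin 2 → ℝ) (r s : ℝ) :
    g2Matrix A X W Y Z r s 3 6 = s := rfl
lemma g2e_4_0 (A : Matrix (Fin 2) (Fin 2) ℝ) (X W Y Z : Fin 2 → ℝ) (r s : ℝ) :
    g2Matrix A X W Y Z r s 4 0 = Y 0 := rfl
lemma g2e_4_1 (A : Matrix (Fin 2) (Fin 2) ℝ) (X W Y Z : Fin 2 → ℝ) (r s : ℝ) :
    g2Matrix A X W Y Z r s 4 1 = 0 := rfl
lemma g2e_4_2 (A : Matrix (Fin 2) (Fin 2) ℝ) (X W Y Z : Fin 2 → ℝ) (r s : ℝ) :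
    g2Matrix A X W Y Z r s 4 2 = r / Real.sqrt 2 := rfl
lemma g2e_4_3 (A : Matrix (Fin 2) (Fin 2) ℝ) (X W Y Z : Fin 2 → ℝ) (r s : ℝ) :
    g2Matrix A X W Y Z r s 4 3 = -(Real.sqrt 2 * X 1) := rfl
lemma g2e_4_4 (A : Matrix (Fin 2) (Fin 2) ℝ) (X W Y Z : Fin 2 → ℝ) (r s : ℝ) :
    g2Matrix A X W Y Z r s 4 4 = -A 0 0 := rfl
lemma g2e_4_5 (A : Matrix (Fin 2) (Fin 2) ℝ) (X W Y Z : Fin 2 → ℝ) (r s : ℝ) :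
    g2Matrix A X W Y Z r s 4 5 = -A 1 0 := rfl
lemma g2e_4_6 (A : Matrix (Fin 2) (Fin 2) ℝ) (X W Y Z : Fin 2 → ℝ) (r s : ℝ) :
    g2Matrix A X W Y Z r s 4 6 = -Z 0 := rfl
lemma g2e_5_0 (A : Matrix (Fin 2) (Fin 2) ℝ) (X W Y Z : Fin 2 → ℝ) (r s : ℝ) :
    g2Matrix A X W Y Z r s 5 0 = Y 1 := rfl
lemma g2e_5_1 (A : Matrix (Fin 2) (Fin 2) ℝ) (X W Y Z : Fin 2 → ℝ) (r s : ℝ) :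
    g2Matrix A X W Y Z r s 5 1 = -(r / Real.sqrt 2) := rfl
lemma g2e_5_2 (A : Matrix (Fin 2) (Fin 2) ℝ) (X W Y Z : Fin 2 → ℝ) (r s : ℝ) :
    g2Matrix A X W Y Z r s 5 2 = 0 := rfl
lemma g2e_5_3 (A : Matrix (Fin 2) (Fin 2) ℝ) (X W Y Z : Fin 2 → ℝ) (r s : ℝ) :
    g2Matrix A X W Y Z r s 5 3 = Real.sqrt 2 * X 0 := rfl
lemma g2e_5_4 (A : Matrix (Fin 2) (Fin 2) ℝ) (X W Y Z : Fin 2 → ℝ) (r s : ℝ) :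
    g2Matrix A X W Y Z r s 5 4 = -A 0 1 := rfl
lemma g2e_5_5 (A : Matrix (Fin 2) (Fin 2) ℝ) (X W Y Z : Fin 2 → ℝ) (r s : ℝ) :
    g2Matrix A X W Y Z r s 5 5 = -A 1 1 := rfl
lemma g2e_5_6 (A : Matrix (Fin 2) (Fin 2) ℝ) (X W Y Z : Fin 2 → ℝ) (r s : ℝ) :
    g2Matrix A X W Y Z r s 5 6 = -Z 1 := rfl
lemma g2e_6_0 (A : Matrix (Fin 2) (Fin 2) ℝ) (X W Y Z : Fin 2 → ℝ) (r s : ℝ) :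
    g2Matrix A X W Y Z r s 6 0 = 0 := rfl
lemma g2e_6_1 (A : Matrix (Fin 2) (Fin 2) ℝ) (X W Y Z : Fin 2 → ℝ) (r s : ℝ) :
    g2Matrix A X W Y Z r s 6 1 = -Y 0 := rfl
lemma g2e_6_2 (A : Matrix (Fin 2) (Fin 2) ℝ) (X W Y Z : Fin 2 → ℝ) (r s : ℝ) :
    g2Matrix A X W Y Z r s 6 2 = -Y 1 := rfl
lemma g2e_6_3 (A : Matrix (Fin 2) (Fin 2) ℝ) (X W Y Z : Fin 2 → ℝ) (r s : ℝ) :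
    g2Matrix A X W Y Z r s 6 3 = r := rfl
lemma g2e_6_4 (A : Matrix (Fin 2) (Fin 2) ℝ) (X W Y Z : Fin 2 → ℝ) (r s : ℝ) :
    g2Matrix A X W Y Z r s 6 4 = -X 0 := rfl
lemma g2e_6_5 (A : Matrix (Fin 2) (Fin 2) ℝ) (X W Y Z : Fin 2 → ℝ) (r s : ℝ) :
    g2Matrix A X W Y Z r s 6 5 = -X 1 := rfl
lemma g2e_6_6 (A : Matrix (Fin 2) (Fin 2) ℝ) (X W Y Z : Fin 2 → ℝ) (r s : ℝ) :
    g2Matrix A X W Y Z r s 6 6 = -A.trace := rfl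

lemma vec14_val_0 (a0 a1 a2 a3 a4 a5 a6 a7 a8 a9 a10 a11 a12 a13 : ℝ) :
    (![a0, a1, a2, a3, a4, a5, a6, a7, a8, a9, a10, a11, a12, a13] : Fin 14 → ℝ) 0 = a0 := rfl
lemma vec14_val_1 (a0 a1 a2 a3 a4 a5 a6 a7 a8 a9 a10 a11 a12 a13 : ℝ) :
    (![a0, a1, a2, a3, a4, a5, a6, a7, a8, a9, a10, a11, a12, a13] : Fin 14 → ℝ) 1 = a1 := rfl
lemma vec14_val_2 (a0 a1 a2 a3 a4 a5 a6 a7 a8 a9 a10 a11 a12 a13 : ℝ) :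
    (![a0, a1, a2, a3, a4, a5, a6, a7, a8, a9, a10, a11, a12, a13] : Fin 14 → ℝ) 2 = a2 := rfl
lemma vec14_val_3 (a0 a1 a2 a3 a4 a5 a6 a7 a8 a9 a10 a11 a12 a13 : ℝ) :
    (![a0, a1, a2, a3, a4, a5, a6, a7, a8, a9, a10, a11, a12, a13] : Fin 14 → ℝ) 3 = a3 := rfl
lemma vec14_val_4 (a0 a1 a2 a3 a4 a5 a6 a7 a8 a9 a10 a11 a12 a13 : ℝ) :
    (![a0, a1, a2, a3, a4, a5, a6, a7, a8, a9, a10, a11, a12, a13] : Fin 14 → ℝ) 4 = a4 := rfl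
lemma vec14_val_5 (a0 a1 a2 a3 a4 a5 a6 a7 a8 a9 a10 a11 a12 a13 : ℝ) :
    (![a0, a1, a2, a3, a4, a5, a6, a7, a8, a9, a10, a11, a12, a13] : Fin 14 → ℝ) 5 = a5 := rfl
lemma vec14_val_6 (a0 a1 a2 a3 a4 a5 a6 a7 a8 a9 a10 a11 a12 a13 : ℝ) :
    (![a0, a1, a2, a3, a4, a5, a6, a7, a8, a9, a10, a11, a12, a13] : Fin 14 → ℝ) 6 = a6 := rfl
lemma vec14_val_7 (a0 a1 a2 a3 a4 a5 a6 a7 a8 a9 a10 a11 a12 a13 : ℝ) :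
    (![a0, a1, a2, a3, a4, a5, a6, a7, a8, a9, a10, a11, a12, a13] : Fin 14 → ℝ) 7 = a7 := rfl
lemma vec14_val_8 (a0 a1 a2 a3 a4 a5 a6 a7 a8 a9 a10 a11 a12 a13 : ℝ) :
    (![a0, a1, a2, a3, a4, a5, a6, a7, a8, a9, a10, a11, a12, a13] : Fin 14 → ℝ) 8 = a8 := rfl
lemma vec14_val_9 (a0 a1 a2 a3 a4 a5 a6 a7 a8 a9 a10 a11 a12 a13 : ℝ) :
    (![a0, a1, a2, a3, a4, a5, a6, a7, a8, a9, a10, a11, a12, a13] : Fin 14 → ℝ) 9 = a9 := rfl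
lemma vec14_val_10 (a0 a1 a2 a3 a4 a5 a6 a7 a8 a9 a10 a11 a12 a13 : ℝ) :
    (![a0, a1, a2, a3, a4, a5, a6, a7, a8, a9, a10, a11, a12, a13] : Fin 14 → ℝ) 10 = a10 := rfl
lemma vec14_val_11 (a0 a1 a2 a3 a4 a5 a6 a7 a8 a9 a10 a11 a12 a13 : ℝ) :
    (![a0, a1, a2, a3, a4, a5, a6, a7, a8, a9, a10, a11, a12, a13] : Fin 14 → ℝ) 11 = a11 := rfl
lemma vec14_val_12 (a0 a1 a2 a3 a4 a5 a6 a7 a8 a9 a10 a11 a12 a13 : ℝ) :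
    (![a0, a1, a2, a3, a4, a5, a6, a7, a8, a9, a10, a11, a12, a13] : Fin 14 → ℝ) 12 = a12 := rfl
lemma vec14_val_13 (a0 a1 a2 a3 a4 a5 a6 a7 a8 a9 a10 a11 a12 a13 : ℝ) :
    (![a0, a1, a2, a3, a4, a5, a6, a7, a8, a9, a10, a11, a12, a13] : Fin 14 → ℝ) 13 = a13 := rfl

set_option maxHeartbeats 4000000 in
lemma g2_mem_mp (M : V7 →ₗ[ℝ] V7)
    (hM : ∀ x y z : V7, Phi0 (M x) y z + Phi0 x (M y) z + Phi0 x y (M z) = 0) :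
    ∃ (A : Matrix (Fin 2) (Fin 2) ℝ) (X W Y Z : Fin 2 → ℝ) (r s : ℝ),
      LinearMap.toMatrix' M = g2Matrix A X W Y Z r s := by
  · 
    have hee : ∀ (i j : Fin 7), ee j i = if i = j then 1 else 0 := fun _ _ => rfl
    have H : ∀ a b c : Fin 7,
        Phi0 (M (ee a)) (ee b) (ee c) + Phi0 (ee a) (M (ee b)) (ee c)
          + Phi0 (ee a) (ee b) (M (ee c)) = 0 := fun a b c => hM (ee a) (ee b) (ee c)
    have hT012 := H 0 1 2
    have hT013 := H 0 1 3
    have hT014 := H 0 1 4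
    have hT015 := H 0 1 5
    have hT016 := H 0 1 6
    have hT023 := H 0 2 3
    have hT024 := H 0 2 4
    have hT025 := H 0 2 5
    have hT026 := H 0 2 6
    have hT034 := H 0 3 4
    have hT035 := H 0 3 5
    have hT036 := H 0 3 6
    have hT045 := H 0 4 5
    have hT046 := H 0 4 6
    have hT056 := H 0 5 6
    have hT123 := H 1 2 3
    have hT124 := H 1 2 4
    have hT125 := H 1 2 5
    have hT126 := H 1 2 6
    have hT134 := H 1 3 4
    have hT135 := H 1 3 5
    have hT136 := H 1 3 6
    have hT145 := H 1 4 5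
    have hT146 := H 1 4 6
    have hT156 := H 1 5 6
    have hT234 := H 2 3 4
    have hT235 := H 2 3 5
    have hT236 := H 2 3 6
    have hT245 := H 2 4 5
    have hT246 := H 2 4 6
    have hT256 := H 2 5 6
    have hT345 := H 3 4 5
    have hT346 := H 3 4 6
    have hT356 := H 3 5 6
    have hT456 := H 4 5 6
    simp only [Phi0, tripleDet, hee, Fin.reduceEq, if_true, if_false, reduceIte] at hT012 hT013 hT014 hT015 hT016 hT023 hT024 hT025 hT026 hT034 hT035 hT036 hT045 hT046 hT056 hT123 hT124 hT125 hT126 hT134 hT135 hT136 hT145 hT146 hT156 hT234 hT235 hT236 hT245 hT246 hT256 hT345 hT346 hT356 hT456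
    have r00 : M (ee 0) 0 = M (ee 1) 1 + M (ee 2) 2 := by
      linear_combination (-2/3) * hT036 + (1/6) * Real.sqrt 2 * hT045 + (-1/3) * Real.sqrt 2 * hT126 + (-1/3) * hT134 + (-1/3) * hT235 + ((-1/6) * M (ee 0) 0 + (1/3) * M (ee 1) 1 + (1/3) * M (ee 2) 2 + (-1/6) * M (ee 4) 4 + (-1/6) * M (ee 5) 5 + (1/3) * M (ee 6) 6) * hsq
    have r06 : M (ee 6) 0 = 0 := by
      linear_combination (1/2) * Real.sqrt 2 * hT456 + ((-1/2) * M (ee 6) 0) * hsq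
    have r13 : M (ee 3) 1 = (-1) * Real.sqrt 2 * M (ee 2) 0 := by
      linear_combination (1/2) * hT046 + (-1/2) * Real.sqrt 2 * hT236 + (1/2) * hT245 + ((-1/2) * M (ee 3) 1) * hsq
    have r14 : M (ee 4) 1 = 0 := by
      linear_combination (-1/2) * Real.sqrt 2 * hT246 + ((-1/2) * M (ee 4) 1) * hsq
    have r15 : M (ee 5) 1 = (-1/2) * Real.sqrt 2 * M (ee 3) 0 := by
      linear_combination (1/4) * Real.sqrt 2 * hT146 + (-1/4) * Real.sqrt 2 * hT256 + (1/2) * hT345 + ((-1/4) * M (ee 5) 1 + (-1/4) * M (ee 4) 2) * hsq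
    have r16 : M (ee 6) 1 = (-1) * M (ee 4) 0 := by
      linear_combination 1 * hT346
    have r23 : M (ee 3) 2 = Real.sqrt 2 * M (ee 1) 0 := by
      linear_combination (1/2) * hT056 + (1/2) * Real.sqrt 2 * hT136 + (-1/2) * hT145 + ((-1/2) * M (ee 3) 2) * hsq
    have r24 : M (ee 4) 2 = (1/2) * Real.sqrt 2 * M (ee 3) 0 := by
      linear_combination (1/4) * Real.sqrt 2 * hT146 + (-1/4) * Real.sqrt 2 * hT256 + (-1/2) * hT345 + ((-1/4) * M (ee 5) 1 + (-1/4) * M (ee 4) 2) * hsq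
    have r25 : M (ee 5) 2 = 0 := by
      linear_combination (1/2) * Real.sqrt 2 * hT156 + ((-1/2) * M (ee 5) 2) * hsq
    have r26 : M (ee 6) 2 = (-1) * M (ee 5) 0 := by
      linear_combination 1 * hT356
    have r31 : M (ee 1) 3 = (-1) * Real.sqrt 2 * M (ee 0) 2 := by
      linear_combination (-1) * hT016
    have r32 : M (ee 2) 3 = Real.sqrt 2 * M (ee 0) 1 := by
      linear_combination (-1) * hT026
    have r33 : M (ee 3) 3 = 0 := by
      linear_combination (-1/3) * hT036 + (-1/6) * Real.sqrt 2 * hT045 + (-1/6) * Real.sqrt 2 * hT126 + (1/3) * hT134 + (1/3) * hT235 + ((1/6) * M (ee 0) 0 + (1/6) * M (ee 1) 1 + (1/6) * M (ee 2) 2 + (1/6) * M (ee 4) 4 + (1/6) * M (ee 5) 5 + (1/6) * M (ee 6) 6) * hsq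
    have r34 : M (ee 4) 3 = (-1) * Real.sqrt 2 * M (ee 2) 0 := by
      linear_combination 1 * hT245
    have r35 : M (ee 5) 3 = Real.sqrt 2 * M (ee 1) 0 := by
      linear_combination (-1) * hT145
    have r36 : M (ee 6) 3 = M (ee 3) 0 := by
      linear_combination (-1/2) * hT146 + (-1/2) * hT256 + (-1/2) * Real.sqrt 2 * hT345 + ((1/2) * M (ee 3) 0) * hsq
    have r41 : M (ee 1) 4 = 0 := by
      linear_combination (1/2) * Real.sqrt 2 * hT015 + ((-1/2) * M (ee 1) 4) * hsq
    have r42 : M (ee 2) 4 = (1/2) * Real.sqrt 2 * M (ee 0) 3 := by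
      linear_combination (1/2) * Real.sqrt 2 * hT025 + ((-1/2) * M (ee 2) 4) * hsq
    have r43 : M (ee 3) 4 = (-1) * Real.sqrt 2 * M (ee 0) 2 := by
      linear_combination (-1/2) * hT016 + (1/2) * Real.sqrt 2 * hT035 + (1/2) * hT125 + ((-1/2) * M (ee 3) 4) * hsq
    have r44 : M (ee 4) 4 = (-1) * M (ee 1) 1 := by
      linear_combination (1/3) * hT036 + (1/6) * Real.sqrt 2 * hT045 + (1/6) * Real.sqrt 2 * hT126 + (2/3) * hT134 + (-1/3) * hT235 + ((-1/6) * M (ee 0) 0 + (-1/6) * M (ee 1) 1 + (-1/6) * M (ee 2) 2 + (-1/6) * M (ee 4) 4 + (-1/6) * M (ee 5) 5 + (-1/6) * M (ee 6) 6) * hsq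
    have r45 : M (ee 5) 4 = (-1) * M (ee 1) 2 := by
      linear_combination 1 * hT135
    have r46 : M (ee 6) 4 = (-1) * M (ee 1) 0 := by
      linear_combination (-1/2) * Real.sqrt 2 * hT056 + (1/2) * Real.sqrt 2 * hT145 + ((-1/2) * M (ee 1) 0 + (-1/2) * M (ee 6) 4) * hsq
    have r51 : M (ee 1) 5 = (-1/2) * Real.sqrt 2 * M (ee 0) 3 := by
      linear_combination (-1/2) * Real.sqrt 2 * hT014 + ((-1/2) * M (ee 1) 5) * hsq
    have r52 : M (ee 2) 5 = 0 := by
      linear_combination (-1/2) * Real.sqrt 2 * hT024 + ((-1/2) * M (ee 2) 5) * hsq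
    have r53 : M (ee 3) 5 = Real.sqrt 2 * M (ee 0) 1 := by
      linear_combination (-1/2) * hT026 + (-1/2) * Real.sqrt 2 * hT034 + (-1/2) * hT124 + ((-1/2) * M (ee 3) 5) * hsq
    have r54 : M (ee 4) 5 = (-1) * M (ee 2) 1 := by
      linear_combination 1 * hT234
    have r55 : M (ee 5) 5 = (-1) * M (ee 2) 2 := by
      linear_combination (1/3) * hT036 + (1/6) * Real.sqrt 2 * hT045 + (1/6) * Real.sqrt 2 * hT126 + (-1/3) * hT134 + (2/3) * hT235 + ((-1/6) * M (ee 0) 0 + (-1/6) * M (ee 1) 1 + (-1/6) * M (ee 2) 2 + (-1/6) * M (ee 4) 4 + (-1/6) * M (ee 5) 5 + (-1/6) * M (ee 6) 6) * hsq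
    have r56 : M (ee 6) 5 = (-1) * M (ee 2) 0 := by
      linear_combination (1/2) * Real.sqrt 2 * hT046 + (1/2) * Real.sqrt 2 * hT245 + ((-1/2) * M (ee 2) 0 + (-1/2) * M (ee 6) 5) * hsq
    have r60 : M (ee 0) 6 = 0 := by
      linear_combination (1/2) * Real.sqrt 2 * hT012 + ((-1/2) * M (ee 0) 6) * hsq
    have r61 : M (ee 1) 6 = (-1) * M (ee 0) 4 := by
      linear_combination 1 * hT013
    have r62 : M (ee 2) 6 = (-1) * M (ee 0) 5 := by
      linear_combination 1 * hT023
    have r63 : M (ee 3) 6 = M (ee 0) 3 := by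
      linear_combination (1/2) * hT014 + (1/2) * hT025 + (1/2) * Real.sqrt 2 * hT123 + ((-1/2) * M (ee 3) 6) * hsq
    have r64 : M (ee 4) 6 = (-1) * M (ee 0) 1 := by
      linear_combination (1/2) * Real.sqrt 2 * hT026 + (1/2) * Real.sqrt 2 * hT124 + ((-1/2) * M (ee 0) 1 + (-1/2) * M (ee 4) 6) * hsq
    have r65 : M (ee 5) 6 = (-1) * M (ee 0) 2 := by
      linear_combination (-1/2) * Real.sqrt 2 * hT016 + (1/2) * Real.sqrt 2 * hT125 + ((-1/2) * M (ee 0) 2 + (-1/2) * M (ee 5) 6) * hsq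
    have r66 : M (ee 6) 6 = (-1) * M (ee 1) 1 + (-1) * M (ee 2) 2 := by
      linear_combination (1/2) * Real.sqrt 2 * hT126 + ((-1/2) * M (ee 1) 1 + (-1/2) * M (ee 2) 2 + (-1/2) * M (ee 6) 6) * hsq
    refine ⟨!![M (ee 1) 1, M (ee 2) 1; M (ee 1) 2, M (ee 2) 2],
      ![M (ee 0) 1, M (ee 0) 2], ![M (ee 4) 0, M (ee 5) 0],
      ![M (ee 0) 4, M (ee 0) 5], ![M (ee 1) 0, M (ee 2) 0],
      M (ee 0) 3, M (ee 3) 0, ?_⟩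
    have hmat : ∀ (i j : Fin 7), LinearMap.toMatrix' M i j = M (ee j) i :=
      fun i j => by
        have hsj : (Pi.single j 1 : V7) = ee j := by
          ext k; simp [ee, Pi.single_apply]
        rw [LinearMap.toMatrix'_apply, hsj]
    ext i j
    rw [hmat]
    fin_cases i <;> fin_cases j <;> simp only [fm0, fm1, fm2, fm3, fm4, fm5, fm6]
    · simp [g2e_0_0, Matrix.trace_fin_two, hdiv]
      linear_combination r00
    · simp [g2e_0_1]
    · simp [g2e_0_2]
    · simp [g2e_0_3]
    · simp [g2e_0_4]
    · simp [g2e_0_5]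
    · simp [g2e_0_6, Matrix.trace_fin_two, hdiv]
      linear_combination r06
    · simp [g2e_1_0]
    · simp [g2e_1_1]
    · simp [g2e_1_2]
    · simp [g2e_1_3, Matrix.trace_fin_two, hdiv]
      linear_combination r13
    · simp [g2e_1_4, Matrix.trace_fin_two, hdiv]
      linear_combination r14
    · simp [g2e_1_5, Matrix.trace_fin_two, hdiv]
      linear_combination r15
    · simp [g2e_1_6, Matrix.trace_fin_two, hdiv]
      linear_combination r16
    · simp [g2e_2_0]
    · simp [g2e_2_1]
    · simp [g2e_2_2]
    · simp [g2e_2_3, Matrix.trace_fin_two, hdiv]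
      linear_combination r23
    · simp [g2e_2_4, Matrix.trace_fin_two, hdiv]
      linear_combination r24
    · simp [g2e_2_5, Matrix.trace_fin_two, hdiv]
      linear_combination r25
    · simp [g2e_2_6, Matrix.trace_fin_two, hdiv]
      linear_combination r26
    · simp [g2e_3_0]
    · simp [g2e_3_1, Matrix.trace_fin_two, hdiv]
      linear_combination r31
    · simp [g2e_3_2, Matrix.trace_fin_two, hdiv]
      linear_combination r32
    · simp [g2e_3_3, Matrix.trace_fin_two, hdiv]
      linear_combination r33
    · simp [g2e_3_4, Matrix.trace_fin_two, hdiv]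
      linear_combination r34
    · simp [g2e_3_5, Matrix.trace_fin_two, hdiv]
      linear_combination r35
    · simp [g2e_3_6, Matrix.trace_fin_two, hdiv]
      linear_combination r36
    · simp [g2e_4_0]
    · simp [g2e_4_1, Matrix.trace_fin_two, hdiv]
      linear_combination r41
    · simp [g2e_4_2, Matrix.trace_fin_two, hdiv]
      linear_combination r42
    · simp [g2e_4_3, Matrix.trace_fin_two, hdiv]
      linear_combination r43
    · simp [g2e_4_4, Matrix.trace_fin_two, hdiv]
      linear_combination r44
    · simp [g2e_4_5, Matrix.trace_fin_two, hdiv]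
      linear_combination r45
    · simp [g2e_4_6, Matrix.trace_fin_two, hdiv]
      linear_combination r46
    · simp [g2e_5_0]
    · simp [g2e_5_1, Matrix.trace_fin_two, hdiv]
      linear_combination r51
    · simp [g2e_5_2, Matrix.trace_fin_two, hdiv]
      linear_combination r52
    · simp [g2e_5_3, Matrix.trace_fin_two, hdiv]
      linear_combination r53
    · simp [g2e_5_4, Matrix.trace_fin_two, hdiv]
      linear_combination r54
    · simp [g2e_5_5, Matrix.trace_fin_two, hdiv]
      linear_combination r55
    · simp [g2e_5_6, Matrix.trace_fin_two, hdiv]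
      linear_combination r56
    · simp [g2e_6_0, Matrix.trace_fin_two, hdiv]
      linear_combination r60
    · simp [g2e_6_1, Matrix.trace_fin_two, hdiv]
      linear_combination r61
    · simp [g2e_6_2, Matrix.trace_fin_two, hdiv]
      linear_combination r62
    · simp [g2e_6_3, Matrix.trace_fin_two, hdiv]
      linear_combination r63
    · simp [g2e_6_4, Matrix.trace_fin_two, hdiv]
      linear_combination r64
    · simp [g2e_6_5, Matrix.trace_fin_two, hdiv]
      linear_combination r65
    · simp [g2e_6_6, Matrix.trace_fin_two, hdiv]
      linear_combination r66

set_option maxHeartbeats 4000000 in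
lemma g2_mem_mpr (M : V7 →ₗ[ℝ] V7)
    (h : ∃ (A : Matrix (Fin 2) (Fin 2) ℝ) (X W Y Z : Fin 2 → ℝ) (r s : ℝ),
      LinearMap.toMatrix' M = g2Matrix A X W Y Z r s) :
    ∀ x y z : V7, Phi0 (M x) y z + Phi0 x (M y) z + Phi0 x y (M z) = 0 := by
  · obtain ⟨A, X, W, Y, Z, r, s, hm⟩ := h
    have hMv : ∀ v : V7, M v = (g2Matrix A X W Y Z r s).mulVec v := by
      intro v
      have hM' : M = Matrix.toLin' (g2Matrix A X W Y Z r s) := by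
        rw [← hm, Matrix.toLin'_toMatrix']
      rw [hM', Matrix.toLin'_apply]
    intro x y z
    rw [hMv x, hMv y, hMv z]
    simp only [Phi0, tripleDet, Matrix.mulVec, dotProduct, Fin.sum_univ_seven,
      g2e_0_0, g2e_0_1, g2e_0_2, g2e_0_3, g2e_0_4, g2e_0_5, g2e_0_6, g2e_1_0, g2e_1_1, g2e_1_2, g2e_1_3, g2e_1_4, g2e_1_5, g2e_1_6, g2e_2_0, g2e_2_1, g2e_2_2, g2e_2_3, g2e_2_4, g2e_2_5, g2e_2_6, g2e_3_0, g2e_3_1, g2e_3_2, g2e_3_3, g2e_3_4, g2e_3_5, g2e_3_6, g2e_4_0, g2e_4_1, g2e_4_2, g2e_4_3, g2e_4_4, g2e_4_5, g2e_4_6, g2e_5_0, g2e_5_1, g2e_5_2, g2e_5_3, g2e_5_4, g2e_5_5, g2e_5_6, g2e_6_0, g2e_6_1, g2e_6_2, g2e_6_3, g2e_6_4, g2e_6_5, g2e_6_6, Matrix.trace_fin_two, hdiv]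
    linear_combination (- X 0 * x 0 * y 3 * z 4 + X 0 * x 0 * y 4 * z 3 + X 0 * x 3 * y 0 * z 4 - X 0 * x 3 * y 4 * z 0 - X 0 * x 4 * y 0 * z 3 + X 0 * x 4 * y 3 * z 0 - X 1 * x 0 * y 3 * z 5 + X 1 * x 0 * y 5 * z 3 + X 1 * x 3 * y 0 * z 5 - X 1 * x 3 * y 5 * z 0 - X 1 * x 5 * y 0 * z 3 + X 1 * x 5 * y 3 * z 0 + Z 0 * x 1 * y 3 * z 6 - Z 0 * x 1 * y 6 * z 3 - Z 0 * x 3 * y 1 * z 6 + Z 0 * x 3 * y 6 * z 1 + Z 0 * x 6 * y 1 * z 3 - Z 0 * x 6 * y 3 * z 1 + Z 1 * x 2 * y 3 * z 6 - Z 1 * x 2 * y 6 * z 3 - Z 1 * x 3 * y 2 * z 6 + Z 1 * x 3 * y 6 * z 2 + Z 1 * x 6 * y 2 * z 3 - Z 1 * x 6 * y 3 * z 2 + (1/2) * r * x 0 * y 1 * z 4 + (1/2) * r * x 0 * y 2 * z 5 - (1/2) * r * x 0 * y 4 * z 1 - (1/2) * r * x 0 * y 5 * z 2 - (1/2) * r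 * x 1 * y 0 * z 4 + (1/2) * r * x 1 * y 4 * z 0 - (1/2) * r * x 2 * y 0 * z 5 + (1/2) * r * x 2 * y 5 * z 0 + (1/2) * r * x 4 * y 0 * z 1 - (1/2) * r * x 4 * y 1 * z 0 + (1/2) * r * x 5 * y 0 * z 2 - (1/2) * r * x 5 * y 2 * z 0 + (1/2) * s * x 1 * y 4 * z 6 - (1/2) * s * x 1 * y 6 * z 4 + (1/2) * s * x 2 * y 5 * z 6 - (1/2) * s * x 2 * y 6 * z 5 - (1/2) * s * x 4 * y 1 * z 6 + (1/2) * s * x 4 * y 6 * z 1 - (1/2) * s * x 5 * y 2 * z 6 + (1/2) * s * x 5 * y 6 * z 2 + (1/2) * s * x 6 * y 1 * z 4 + (1/2) * s * x 6 * y 2 * z 5 - (1/2) * s * x 6 * y 4 * z 1 - (1/2) * s * x 6 * y 5 * z 2) * hsq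

lemma g2_mem_iff (M : V7 →ₗ[ℝ] V7) :
    (∀ x y z : V7, Phi0 (M x) y z + Phi0 x (M y) z + Phi0 x y (M z) = 0) ↔
    ∃ (A : Matrix (Fin 2) (Fin 2) ℝ) (X W Y Z : Fin 2 → ℝ) (r s : ℝ),
      LinearMap.toMatrix' M = g2Matrix A X W Y Z r s :=
  ⟨g2_mem_mp M, g2_mem_mpr M⟩

-- ===== dimension count =====

/-- parameter-to-matrix map -/
def pmat (p : Fin 14 → ℝ) : Matrix (Fin 7) (Fin 7) ℝ :=
  g2Matrix !![p 0, p 1; p 2, p 3] ![p 4, p 5] ![p 6, p 7] ![p 8, p 9] ![p 10, p 11] (p 12) (p 13)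

set_option maxHeartbeats 2000000 in
lemma pmat_add (p q : Fin 14 → ℝ) : pmat (p + q) = pmat p + pmat q := by
  ext i j
  fin_cases i <;> fin_cases j <;>
    simp [pmat, g2e_0_0, g2e_0_1, g2e_0_2, g2e_0_3, g2e_0_4, g2e_0_5, g2e_0_6, g2e_1_0, g2e_1_1, g2e_1_2, g2e_1_3, g2e_1_4, g2e_1_5, g2e_1_6, g2e_2_0, g2e_2_1, g2e_2_2, g2e_2_3, g2e_2_4, g2e_2_5, g2e_2_6, g2e_3_0, g2e_3_1, g2e_3_2, g2e_3_3, g2e_3_4, g2e_3_5, g2e_3_6, g2e_4_0, g2e_4_1, g2e_4_2, g2e_4_3, g2e_4_4, g2e_4_5, g2e_4_6, g2e_5_0, g2e_5_1, g2e_5_2, g2e_5_3, g2e_5_4, g2e_5_5, g2e_5_6, g2e_6_0, g2e_6_1, g2e_6_2, g2e_6_3, g2e_6_4, g2e_6_5, g2e_6_6, Matrix.trace_fin_two, Matrix.add_apply, Pi.add_apply,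
      fm0, fm1, fm2, fm3, fm4, fm5, fm6] <;> ring

set_option maxHeartbeats 2000000 in
lemma pmat_smul (c : ℝ) (p : Fin 14 → ℝ) : pmat (c • p) = c • pmat p := by
  ext i j
  fin_cases i <;> fin_cases j <;>
    simp [pmat, g2e_0_0, g2e_0_1, g2e_0_2, g2e_0_3, g2e_0_4, g2e_0_5, g2e_0_6, g2e_1_0, g2e_1_1, g2e_1_2, g2e_1_3, g2e_1_4, g2e_1_5, g2e_1_6, g2e_2_0, g2e_2_1, g2e_2_2, g2e_2_3, g2e_2_4, g2e_2_5, g2e_2_6, g2e_3_0, g2e_3_1, g2e_3_2, g2e_3_3, g2e_3_4, g2e_3_5, g2e_3_6, g2e_4_0, g2e_4_1, g2e_4_2, g2e_4_3, g2e_4_4, g2e_4_5, g2e_4_6, g2e_5_0, g2e_5_1, g2e_5_2, g2e_5_3, g2e_5_4, g2e_5_5, g2e_5_6, g2e_6_0, g2e_6_1, g2e_6_2, g2e_6_3, g2e_6_4, g2e_6_5, g2e_6_6, Matrix.trace_fin_two, Matrix.smul_apply, Pi.smul_apply,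
      smul_eq_mul, fm0, fm1, fm2, fm3, fm4, fm5, fm6] <;> ring

/-- the parametrization of `𝔤₂` as a linear map -/
def Lparam : (Fin 14 → ℝ) →ₗ[ℝ] (V7 →ₗ[ℝ] V7) where
  toFun p := Matrix.toLin' (pmat p)
  map_add' p q := by
    show Matrix.toLin' (pmat (p + q)) = Matrix.toLin' (pmat p) + Matrix.toLin' (pmat q)
    rw [pmat_add, map_add]
  map_smul' c p := by
    show Matrix.toLin' (pmat (c • p)) = c • Matrix.toLin' (pmat p)
    rw [pmat_smul, map_smul]

set_option maxHeartbeats 1000000 in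
lemma Lparam_inj : Function.Injective Lparam := by
  intro p q h
  have h' : pmat p = pmat q := by
    have h2 := congrArg LinearMap.toMatrix' h
    simpa [Lparam, LinearMap.toMatrix'_toLin'] using h2
  funext k
  fin_cases k
  · have hk := congrFun (congrFun h' 1) 1
    simpa [pmat, g2e_1_1] using hk
  · have hk := congrFun (congrFun h' 1) 2
    simpa [pmat, g2e_1_2] using hk
  · have hk := congrFun (congrFun h' 2) 1
    simpa [pmat, g2e_2_1] using hk
  · have hk := congrFun (congrFun h' 2) 2
    simpa [pmat, g2e_2_2] using hk
  · have hk := congrFun (congrFun h' 1) 0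
    simpa [pmat, g2e_1_0] using hk
  · have hk := congrFun (congrFun h' 2) 0
    simpa [pmat, g2e_2_0] using hk
  · have hk := congrFun (congrFun h' 0) 4
    simpa [pmat, g2e_0_4] using hk
  · have hk := congrFun (congrFun h' 0) 5
    simpa [pmat, g2e_0_5] using hk
  · have hk := congrFun (congrFun h' 4) 0
    simpa [pmat, g2e_4_0] using hk
  · have hk := congrFun (congrFun h' 5) 0
    simpa [pmat, g2e_5_0] using hk
  · have hk := congrFun (congrFun h' 0) 1
    simpa [pmat, g2e_0_1] using hk
  · have hk := congrFun (congrFun h' 0) 2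
    simpa [pmat, g2e_0_2] using hk
  · have hk := congrFun (congrFun h' 3) 0
    simpa [pmat, g2e_3_0] using hk
  · have hk := congrFun (congrFun h' 0) 3
    simpa [pmat, g2e_0_3] using hk

lemma vec2_eta (v : Fin 2 → ℝ) : ![v 0, v 1] = v := by
  funext k; fin_cases k <;> rfl

lemma g2_eq_range : g2 = LinearMap.range Lparam := by
  apply le_antisymm
  · intro M hM
    obtain ⟨A, X, W, Y, Z, r, s, hm⟩ := (g2_mem_iff M).1 hM
    refine ⟨![A 0 0, A 0 1, A 1 0, A 1 1, X 0, X 1, W 0, W 1, Y 0, Y 1, Z 0, Z 1, r, s], ?_⟩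
    show Matrix.toLin' (pmat _) = M
    have hp : pmat ![A 0 0, A 0 1, A 1 0, A 1 1, X 0, X 1, W 0, W 1, Y 0, Y 1, Z 0, Z 1, r, s]
        = g2Matrix A X W Y Z r s := by
      unfold pmat
      simp only [vec14_val_0, vec14_val_1, vec14_val_2, vec14_val_3, vec14_val_4, vec14_val_5,
        vec14_val_6, vec14_val_7, vec14_val_8, vec14_val_9, vec14_val_10, vec14_val_11,
        vec14_val_12, vec14_val_13]
      rw [← Matrix.eta_fin_two A, vec2_eta X, vec2_eta W, vec2_eta Y, vec2_eta Z]
    rw [hp, ← hm, Matrix.toLin'_toMatrix']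
  · rintro M ⟨p, rfl⟩
    show ∀ x y z : V7, _
    exact (g2_mem_iff (Lparam p)).2 ⟨!![p 0, p 1; p 2, p 3], ![p 4, p 5], ![p 6, p 7],
      ![p 8, p 9], ![p 10, p 11], p 12, p 13,
      by show LinearMap.toMatrix' (Matrix.toLin' (pmat p)) = _; rw [LinearMap.toMatrix'_toLin']; rfl⟩

lemma g2_finrank : Module.finrank ℝ g2 = 14 := by
  rw [g2_eq_range, LinearMap.finrank_range_of_inj Lparam_inj]
  simp

/-- An endomorphism `M` of `V` satisfies the `𝔤₂` derivation identity for `Φ₀` iff its matrix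
in the standard basis has the indicated block form; in particular `𝔤₂` is 14-dimensional. -/
theorem g2_matrix_characterization :
    (∀ M : V7 →ₗ[ℝ] V7,
      (∀ x y z : V7, Phi0 (M x) y z + Phi0 x (M y) z + Phi0 x y (M z) = 0) ↔
      ∃ (A : Matrix (Fin 2) (Fin 2) ℝ) (X W Y Z : Fin 2 → ℝ) (r s : ℝ),
        LinearMap.toMatrix' M = g2Matrix A X W Y Z r s) ∧
    Module.finrank ℝ g2 = 14 := by
  exact ⟨g2_mem_iff, g2_finrank⟩

end
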